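/- Under Assumption (A), if ν ∈ M₊(W_S) is a quasi-stationary distribution such that ν(η_S) > 0 and ν{x : j_S(x) ≤ ℓ} = 1 for some ℓ ≥ 0, then the absorption parameter of ν equals θ_{0,S}. -/

import Mathlib

open MeasureTheory ProbabilityTheory Filter ENNReal

variable {α : Type*} [MeasurableSpace α]

noncomputable def kmass (S : ℕ → Kernel α α) (n : ℕ) (μ : Measure α) : ℝ≥0∞ :=
  Measure.bind μ (fun x => S n x) Set.univ

noncomputable def expParam (S : ℕ → Kernel α α) (μ : Measure α) : ℝ≥0∞ :=
  sInf {θ : ℝ≥0∞ | Filter.liminf (fun n : ℕ => θ⁻¹ ^ n * kmass S n μ) Filter.atTop = 0}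

noncomputable def theta0 (S : ℕ → Kernel α α) : ℝ≥0∞ :=
  ⨆ x : α, expParam S (Measure.dirac x)

noncomputable def polyParam (S : ℕ → Kernel α α) (μ : Measure α) : ℝ :=
  sInf {l : ℝ | 0 ≤ l ∧
    Filter.liminf (fun n : ℕ => (n : ℝ≥0∞) ^ (-l) * (theta0 S)⁻¹ ^ n * kmass S n μ)
      Filter.atTop = 0}

noncomputable def jfun (S : ℕ → Kernel α α) (x : α) : ℝ :=
  polyParam S (Measure.dirac x)

def IsSubMarkovSemigroup (S : ℕ → Kernel α α) : Prop :=
  S 0 = Kernel.id ∧ (∀ n m, S (n + m) = (S m) ∘ₖ (S n)) ∧ ∀ n x, (S n) x Set.univ ≤ 1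

-- Auxiliary lemmas

lemma kmass_apply (S : ℕ → Kernel α α) (n : ℕ) (μ : Measure α) :
    kmass S n μ = ∫⁻ x, S n x Set.univ ∂μ := by
  rw [kmass, Measure.bind_apply MeasurableSet.univ (Kernel.measurable (S n)).aemeasurable]

lemma kmass_dirac (S : ℕ → Kernel α α) (n : ℕ) (x : α) :
    kmass S n (Measure.dirac x) = S n x Set.univ := by
  rw [kmass, Measure.dirac_bind (Kernel.measurable (S n))]

noncomputable def Fl (S : ℕ → Kernel α α) (r : ℝ) (x : α) : ℝ≥0∞ :=
  Filter.liminf (fun n : ℕ => (n : ℝ≥0∞) ^ (-r) * (theta0 S)⁻¹ ^ n * (S n x Set.univ))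
    Filter.atTop

lemma jfun_eq_sInf (S : ℕ → Kernel α α) (x : α) :
    jfun S x = sInf {r : ℝ | 0 ≤ r ∧ Fl S r x = 0} := by
  unfold jfun polyParam Fl
  simp only [kmass_dirac]

lemma Fl_anti (S : ℕ → Kernel α α) (x : α) {r r' : ℝ} (h : r ≤ r') :
    Fl S r' x ≤ Fl S r x := by
  have hev : ∀ᶠ n : ℕ in atTop,
      (n : ℝ≥0∞) ^ (-r') * (theta0 S)⁻¹ ^ n * (S n x Set.univ) ≤
      (n : ℝ≥0∞) ^ (-r) * (theta0 S)⁻¹ ^ n * (S n x Set.univ) := by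
    filter_upwards [Filter.eventually_ge_atTop 1] with n hn
    have h1 : (1 : ℝ≥0∞) ≤ (n : ℝ≥0∞) := by exact_mod_cast hn
    exact mul_le_mul_left
      (mul_le_mul_left (ENNReal.rpow_le_rpow_of_exponent_le h1 (neg_le_neg h)) _) _
  exact Filter.liminf_le_liminf hev

lemma Fl_measurable (S : ℕ → Kernel α α) (r : ℝ) : Measurable (fun x => Fl S r x) := by
  apply Measurable.liminf
  intro n
  exact (Kernel.measurable_coe (S n) MeasurableSet.univ).const_mul _

lemma measurableSet_jfun_le (S : ℕ → Kernel α α) {l : ℝ} (hl0 : 0 ≤ l) :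
    MeasurableSet {x : α | jfun S x ≤ l} := by
  have hset : {x : α | jfun S x ≤ l} =
      (⋂ (q : ℚ) (_ : 0 ≤ (q : ℝ)), {x | Fl S (q : ℝ) x ≠ 0}) ∪
      (⋂ (q : ℚ) (_ : l < (q : ℝ)), {x | Fl S (q : ℝ) x = 0}) := by
    ext x
    simp only [Set.mem_setOf_eq, Set.mem_union, Set.mem_iInter]
    have hjf : jfun S x = sInf {r : ℝ | 0 ≤ r ∧ Fl S r x = 0} := jfun_eq_sInf S x
    set A : Set ℝ := {r : ℝ | 0 ≤ r ∧ Fl S r x = 0} with hA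
    have hup : ∀ r r' : ℝ, r ∈ A → r ≤ r' → r' ∈ A := by
      intro r r' hr hle
      exact ⟨hr.1.trans hle, le_antisymm (hr.2 ▸ Fl_anti S x hle) zero_le⟩
    constructor
    · intro hx
      by_cases hne : A.Nonempty
      · right
        intro q hq
        have hlt : sInf A < (q : ℝ) := lt_of_le_of_lt (hjf ▸ hx) hq
        obtain ⟨r, hr, hrq⟩ := exists_lt_of_csInf_lt hne hlt
        exact (hup r q hr hrq.le).2
      · left
        intro q hq h0
        exact hne ⟨(q : ℝ), hq, h0⟩
    · rintro (hE | hG)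
      · have hA0 : A = ∅ := by
          ext r
          simp only [Set.mem_empty_iff_false, iff_false]
          intro hr
          obtain ⟨q, hq⟩ := exists_rat_gt r
          exact hE q (hr.1.trans hq.le) (hup r q hr hq.le).2
        rw [hjf, hA0, Real.sInf_empty]
        exact hl0
      · rw [hjf]
        refine le_of_forall_pos_le_add fun ε hε => ?_
        obtain ⟨q, hq1, hq2⟩ := exists_rat_btwn (lt_add_of_pos_right l hε)
        have hqA : (q : ℝ) ∈ A := ⟨hl0.trans hq1.le, hG q hq1⟩
        exact le_trans (csInf_le ⟨0, fun r hr => hr.1⟩ hqA) hq2.le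
  rw [hset]
  apply MeasurableSet.union
  · refine MeasurableSet.iInter fun q => MeasurableSet.iInter fun _ => ?_
    exact ((Fl_measurable S (q : ℝ)) (measurableSet_singleton 0)).compl
  · refine MeasurableSet.iInter fun q => MeasurableSet.iInter fun _ => ?_
    exact (Fl_measurable S (q : ℝ)) (measurableSet_singleton 0)

lemma le_of_pow_le_pow_poly {b t K : ℝ} (hb : 0 < b) (ht : 0 < t) (L : ℕ)
    (h : ∀ᶠ n : ℕ in atTop, b ^ n ≤ K * (n : ℝ) ^ L * t ^ n) : b ≤ t := by
  by_contra hlt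
  push_neg at hlt
  have hr : ‖t / b‖ < 1 := by
    rw [Real.norm_eq_abs, abs_of_pos (div_pos ht hb)]
    exact (div_lt_one hb).2 hlt
  have h0 : Tendsto (fun n : ℕ => K * ((n : ℝ) ^ L * (t / b) ^ n)) atTop (nhds 0) := by
    have hsum := (summable_pow_mul_geometric_of_norm_lt_one L hr).tendsto_atTop_zero
    have := hsum.const_mul K
    simpa using this
  have h1 : ∀ᶠ n : ℕ in atTop, (1 : ℝ) ≤ K * ((n : ℝ) ^ L * (t / b) ^ n) := by
    filter_upwards [h] with n hn
    have hbn : (0 : ℝ) < b ^ n := pow_pos hb n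
    have h2 : (1 : ℝ) ≤ K * (n : ℝ) ^ L * t ^ n / b ^ n := by
      rw [le_div_iff₀ hbn]
      simpa using hn
    calc (1 : ℝ) ≤ K * (n : ℝ) ^ L * t ^ n / b ^ n := h2
      _ = K * ((n : ℝ) ^ L * (t / b) ^ n) := by rw [div_pow]; ring
  have := ge_of_tendsto h0 h1
  linarith

lemma pointwise_upper {t0 p s gx aw Lb : ℝ} (ht0 : 0 < t0) (hp1 : 1 ≤ p) (hs0 : 0 ≤ s)
    (hsum0 : 0 ≤ gx + aw) (hpL : p ≤ Lb) (n : ℕ)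
    (h : t0⁻¹ ^ n * p⁻¹ * s ≤ gx + aw) : s ≤ t0 ^ n * Lb * (gx + aw) := by
  have hppos : (0 : ℝ) < p := lt_of_lt_of_le one_pos hp1
  have e : s = t0 ^ n * p * (t0⁻¹ ^ n * p⁻¹ * s) := by
    have e1 : t0 ^ n * t0⁻¹ ^ n = 1 := by
      rw [← mul_pow, mul_inv_cancel₀ (ne_of_gt ht0), one_pow]
    have e2 : p * p⁻¹ = 1 := mul_inv_cancel₀ (ne_of_gt hppos)
    calc s = (t0 ^ n * t0⁻¹ ^ n) * ((p * p⁻¹) * s) := by rw [e1, e2]; ring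
      _ = t0 ^ n * p * (t0⁻¹ ^ n * p⁻¹ * s) := by ring
  calc s = t0 ^ n * p * (t0⁻¹ ^ n * p⁻¹ * s) := e
    _ ≤ t0 ^ n * p * (gx + aw) := by
        apply mul_le_mul_of_nonneg_left h (by positivity)
    _ ≤ t0 ^ n * Lb * (gx + aw) := by
        apply mul_le_mul_of_nonneg_right _ hsum0
        exact mul_le_mul_of_nonneg_left hpL (by positivity)

lemma pointwise_lower {t0 p s gx aw : ℝ} (ht0 : 0 < t0) (hp1 : 1 ≤ p) (hs0 : 0 ≤ s) (n : ℕ)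
    (h : gx - aw ≤ t0⁻¹ ^ n * p⁻¹ * s) : gx ≤ t0⁻¹ ^ n * s + aw := by
  have hpinv : p⁻¹ ≤ 1 := inv_le_one_of_one_le₀ hp1
  have h2 : t0⁻¹ ^ n * p⁻¹ * s ≤ t0⁻¹ ^ n * s := by
    have h3 : p⁻¹ * s ≤ s := mul_le_of_le_one_left hs0 hpinv
    calc t0⁻¹ ^ n * p⁻¹ * s = t0⁻¹ ^ n * (p⁻¹ * s) := by ring
      _ ≤ t0⁻¹ ^ n * s := mul_le_mul_of_nonneg_left h3 (by positivity)
  linarith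

/-- **Assumption (A)** of Champagnat–Villemonais, for the sub-Markovian semigroup `S`,
with weight function `W`, probability measures `ν i`, functions `η i` (`i` in the finite or
countable index set `I`) and rate sequence `a`. -/
structure AssumptionA (S : ℕ → Kernel α α) {I : Type} (W : α → ℝ)
    (ν : I → Measure α) (η : I → α → ℝ) (a : ℕ → ℝ) : Prop where
  countable : Countable I
  theta0_pos : 0 < theta0 S
  theta0_le_one : theta0 S ≤ 1
  j_nat : ∀ x : α, ∃ k : ℕ, jfun S x = (k : ℝ)
  W_meas : Measurable W
  one_le_W : ∀ x, 1 ≤ W x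
  nu_prob : ∀ i, IsProbabilityMeasure (ν i)
  nu_W : ∀ i, ∫⁻ x, ENNReal.ofReal (W x) ∂(ν i) ≠ ∞
  eta_meas : ∀ i, Measurable (η i)
  eta_nonneg : ∀ i x, 0 ≤ η i x
  eta_ne_zero : ∀ i, η i ≠ 0
  eta_bdd : ∀ i, ∃ C : ℝ, ∀ x, η i x ≤ C * W x
  summable_etanu : ∀ x, Summable (fun i => η i x * (∫⁻ y, ENNReal.ofReal (W y) ∂(ν i)).toReal)
  etanu_bdd : ∃ C : ℝ, ∀ x,
    (∑' i, η i x * (∫⁻ y, ENNReal.ofReal (W y) ∂(ν i)).toReal) ≤ C * W x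
  SW_fin : ∀ n x, ∫⁻ y, ENNReal.ofReal (W y) ∂(S n x) ≠ ∞
  a_nonneg : ∀ n, 0 ≤ a n
  a_tendsto : Tendsto a atTop (nhds 0)
  approx : ∀ f : α → ℝ, Measurable f → ∀ c : ℝ, 0 ≤ c → (∀ x, |f x| ≤ c * W x) →
    ∀ n : ℕ, 1 ≤ n → ∀ x : α,
      |((theta0 S).toReal)⁻¹ ^ n * (n : ℝ) ^ (-(jfun S x)) * (∫ y, f y ∂(S n x)) -
        ∑' i, η i x * ∫ y, f y ∂(ν i)| ≤ a n * W x * c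

/-- `ν` is a quasi-stationary distribution for `S`. -/
def IsQSD (S : ℕ → Kernel α α) (ν : Measure α) : Prop :=
  IsProbabilityMeasure ν ∧ ∀ n, kmass S n ν ≠ 0 ∧
    Measure.bind ν (fun x => S n x) = kmass S n ν • ν

/-- Under Assumption (A), if `ν ∈ M₊(W_S)` is a quasi-stationary distribution
with `ν(η_S) > 0` and `ν{x : j_S(x) ≤ ℓ} = 1` for some `ℓ ≥ 0`, then the absorption parameter
of `ν` equals `θ_{0,S}`, i.e. `ℙ_ν(n < τ_∂) = θ_{0,S}^n` for all `n`. -/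
theorem absorption_parameter_eq_theta0
    (S : ℕ → Kernel α α) (hS : IsSubMarkovSemigroup S)
    {I : Type} {W : α → ℝ} {ν : I → Measure α} {η : I → α → ℝ} {a : ℕ → ℝ}
    (hA : AssumptionA S W ν η a)
    (νq : Measure α) (hq : IsQSD S νq)
    (hνW : (∫⁻ x, ENNReal.ofReal (W x) ∂νq) ≠ ∞)
    (hη : 0 < ∫ x, (∑' i, η i x) ∂νq)
    (hl : ∃ l : ℝ, 0 ≤ l ∧ νq {x | jfun S x ≤ l} = 1) :
    ∀ n : ℕ, kmass S n νq = theta0 S ^ n := by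
    classical
  obtain ⟨hprob, hqs⟩ := hq
  haveI := hprob
  obtain ⟨l, hl0, hl1⟩ := hl
  -- multiplicativity of the mass
  have hpow : ∀ n : ℕ, kmass S n νq = (kmass S 1 νq) ^ n := by
    intro n
    induction n with
    | zero =>
      rw [pow_zero, kmass, hS.1]
      simp_rw [Kernel.id_apply]
      rw [Measure.bind_dirac]
      exact measure_univ
    | succ n ih =>
      have hcomp : S (n + 1) = (S 1) ∘ₖ (S n) := hS.2.1 n 1
      have step1 : kmass S (n + 1) νq = kmass S n νq * kmass S 1 νq := by
        rw [kmass, hcomp]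
        simp_rw [Kernel.comp_apply]
        rw [← Measure.bind_bind (Kernel.measurable (S n)).aemeasurable (Kernel.measurable (S 1)).aemeasurable]
        have hb : νq.bind (fun x => S n x) = kmass S n νq • νq := (hqs n).2
        rw [hb, Measure.bind_apply MeasurableSet.univ (Kernel.measurable (S 1)).aemeasurable,
          lintegral_smul_measure,
          ← Measure.bind_apply MeasurableSet.univ (Kernel.measurable (S 1)).aemeasurable]
        rfl
      rw [step1, ih, pow_succ]
  set θ : ℝ≥0∞ := kmass S 1 νq with hθdef
  suffices hθ : θ = theta0 S by
    intro n; rw [hpow n, hθ]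
  -- basic facts on θ and theta0
  have hθ0 : θ ≠ 0 := (hqs 1).1
  have hθ1 : θ ≤ 1 := by
    rw [hθdef, kmass_apply]
    calc ∫⁻ x, S 1 x Set.univ ∂νq ≤ ∫⁻ _, 1 ∂νq := lintegral_mono fun x => hS.2.2 1 x
      _ = 1 := by simp
  have hθtop : θ ≠ ∞ := ne_top_of_le_ne_top ENNReal.one_ne_top hθ1
  have h0top : theta0 S ≠ ∞ := ne_top_of_le_ne_top ENNReal.one_ne_top hA.theta0_le_one
  set t : ℝ := θ.toReal with htdef
  set t0 : ℝ := (theta0 S).toReal with ht0def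
  have ht : 0 < t := ENNReal.toReal_pos hθ0 hθtop
  have ht0 : 0 < t0 := ENNReal.toReal_pos (ne_of_gt hA.theta0_pos) h0top
  -- the key integral identity
  have hsmeas : ∀ n : ℕ, Measurable fun x => ((S n x) Set.univ).toReal := fun n =>
    (Kernel.measurable_coe (S n) MeasurableSet.univ).ennreal_toReal
  have key : ∀ n : ℕ, ∫ x, ((S n x) Set.univ).toReal ∂νq = t ^ n := by
    intro n
    rw [integral_toReal (Kernel.measurable_coe (S n) MeasurableSet.univ).aemeasurable
      (ae_of_all _ fun x => lt_of_le_of_lt (hS.2.2 n x) ENNReal.one_lt_top)]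
    rw [← kmass_apply, hpow n, ENNReal.toReal_pow, ← htdef]
  have hsint : ∀ n : ℕ, Integrable (fun x => ((S n x) Set.univ).toReal) νq := by
    intro n
    refine Integrable.mono' (integrable_const (1 : ℝ)) (hsmeas n).aestronglyMeasurable ?_
    refine ae_of_all _ fun x => ?_
    rw [Real.norm_eq_abs, abs_of_nonneg ENNReal.toReal_nonneg]
    exact ENNReal.toReal_mono ENNReal.one_ne_top (hS.2.2 n x) |>.trans (by simp)
  -- facts about W
  have hW0 : ∀ x, (0 : ℝ) ≤ W x := fun x => le_trans zero_le_one (hA.one_le_W x)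
  have hWint : Integrable W νq := by
    refine ⟨hA.W_meas.aestronglyMeasurable, ?_⟩
    rw [HasFiniteIntegral]
    have heq : ∀ x, ‖W x‖ₑ = ENNReal.ofReal (W x) := fun x =>
      Real.enorm_eq_ofReal (hW0 x)
    simp_rw [heq]
    exact lt_top_iff_ne_top.2 hνW
  set IW : ℝ := ∫ x, W x ∂νq with hIWdef
  have hIW1 : (1 : ℝ) ≤ IW := by
    rw [hIWdef]
    calc (1 : ℝ) = ∫ _, (1 : ℝ) ∂νq := by simp
      _ ≤ ∫ x, W x ∂νq := integral_mono (integrable_const 1) hWint hA.one_le_W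
  have hIWpos : (0 : ℝ) < IW := lt_of_lt_of_le one_pos hIW1
  -- facts about g = sum of eta
  have hg0 : ∀ x, (0 : ℝ) ≤ ∑' i, η i x := fun x => tsum_nonneg fun i => hA.eta_nonneg i x
  obtain ⟨C, hC⟩ := hA.etanu_bdd
  have hgW : ∀ x, (∑' i, η i x) ≤ C * W x := by
    intro x
    have hterm : ∀ i, η i x ≤ η i x * (∫⁻ y, ENNReal.ofReal (W y) ∂(ν i)).toReal := by
      intro i
      refine le_mul_of_one_le_right (hA.eta_nonneg i x) ?_
      have h1 : (1 : ℝ≥0∞) ≤ ∫⁻ y, ENNReal.ofReal (W y) ∂(ν i) := by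
        haveI := hA.nu_prob i
        calc (1 : ℝ≥0∞) = ∫⁻ _, 1 ∂(ν i) := by simp
          _ ≤ ∫⁻ y, ENNReal.ofReal (W y) ∂(ν i) :=
            lintegral_mono fun y => ENNReal.one_le_ofReal.2 (hA.one_le_W y)
      calc (1 : ℝ) = (1 : ℝ≥0∞).toReal := by simp
        _ ≤ _ := ENNReal.toReal_mono (hA.nu_W i) h1
    calc (∑' i, η i x) ≤ ∑' i, η i x * (∫⁻ y, ENNReal.ofReal (W y) ∂(ν i)).toReal := by
          refine Summable.tsum_le_tsum hterm ?_ (hA.summable_etanu x)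
          exact Summable.of_nonneg_of_le (fun i => hA.eta_nonneg i x) hterm (hA.summable_etanu x)
      _ ≤ C * W x := hC x
  -- bound on a
  obtain ⟨Ab, hAbmem⟩ := hA.a_tendsto.bddAbove_range
  have hAb : ∀ n, a n ≤ Ab := fun n => hAbmem (Set.mem_range_self n)
  have hAb0 : 0 ≤ Ab := le_trans (hA.a_nonneg 0) (hAb 0)
  -- approximation with f = 1
  have happrox : ∀ n : ℕ, 1 ≤ n → ∀ x : α,
      |t0⁻¹ ^ n * (n : ℝ) ^ (-(jfun S x)) * ((S n x) Set.univ).toReal - ∑' i, η i x| ≤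
        a n * W x := by
    intro n hn x
    have h := hA.approx (fun _ => 1) measurable_const 1 zero_le_one
      (fun y => by simpa using hA.one_le_W y) n hn x
    have hnu : ∀ i : I, (ν i) Set.univ = 1 := fun i => (hA.nu_prob i).measure_univ
    simp only [integral_const, smul_eq_mul, mul_one, hnu, measureReal_def, ENNReal.toReal_one] at h
    rw [← ht0def] at h
    simpa using h
  -- pointwise facts about p = n ^ jfun
  have hjfacts : ∀ (n : ℕ), 1 ≤ n → ∀ x : α,
      0 ≤ jfun S x ∧ 1 ≤ (n : ℝ) ^ (jfun S x) ∧
      (n : ℝ) ^ (-(jfun S x)) = ((n : ℝ) ^ (jfun S x))⁻¹ := by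
    intro n hn x
    obtain ⟨k, hk⟩ := hA.j_nat x
    have hj0 : 0 ≤ jfun S x := by rw [hk]; positivity
    have hn1 : (1 : ℝ) ≤ (n : ℝ) := by exact_mod_cast hn
    exact ⟨hj0, Real.one_le_rpow hn1 hj0, Real.rpow_neg (by linarith) _⟩
  -- the a.e. bound on jfun
  have hae : ∀ᵐ x ∂νq, jfun S x ≤ l := by
    have hms : MeasurableSet {x : α | jfun S x ≤ l} := measurableSet_jfun_le S hl0
    have hcompl : νq {x : α | jfun S x ≤ l}ᶜ = 0 := (prob_compl_eq_zero_iff hms).2 hl1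
    rw [ae_iff]
    convert hcompl using 2
    rfl
  set L : ℕ := ⌈l⌉₊ with hLdef
  -- lower bound: t0 ≤ t
  set m : ℝ := ∫ x, (∑' i, η i x) ∂νq with hmdef
  have hm : 0 < m := hη
  have hlowint : ∀ n : ℕ, 1 ≤ n → m ≤ t0⁻¹ ^ n * t ^ n + a n * IW := by
    intro n hn
    have hptwise : ∀ x, (∑' i, η i x) ≤ t0⁻¹ ^ n * ((S n x) Set.univ).toReal + a n * W x := by
      intro x
      obtain ⟨hj0, hp1, hpinv⟩ := hjfacts n hn x
      have happ := happrox n hn x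
      rw [hpinv] at happ
      exact pointwise_lower ht0 hp1 ENNReal.toReal_nonneg n (by linarith [abs_le.1 happ |>.1])
    have hint : m ≤ ∫ x, (t0⁻¹ ^ n * ((S n x) Set.univ).toReal + a n * W x) ∂νq := by
      rw [hmdef]
      refine integral_mono_of_nonneg (ae_of_all _ hg0) ?_ (ae_of_all _ hptwise)
      exact ((hsint n).const_mul _).add (hWint.const_mul _)
    rwa [integral_add ((hsint n).const_mul _) (hWint.const_mul _), integral_const_mul,
      integral_const_mul, key n, ← hIWdef] at hint
  have hev2 : ∀ᶠ n : ℕ in atTop, t0 ^ n ≤ (2 / m) * (n : ℝ) ^ (0 : ℕ) * t ^ n := by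
    have hsmall : ∀ᶠ n : ℕ in atTop, a n < m / (2 * IW) :=
      hA.a_tendsto.eventually (gt_mem_nhds (by positivity))
    filter_upwards [hsmall, eventually_ge_atTop 1] with n h1 h2
    have hint := hlowint n h2
    have h3 : a n * IW < m / 2 := by
      calc a n * IW < (m / (2 * IW)) * IW := mul_lt_mul_of_pos_right h1 hIWpos
        _ = m / 2 := by field_simp
    have h4 : m / 2 ≤ t0⁻¹ ^ n * t ^ n := by linarith
    have h5 : t0 ^ n * (t0⁻¹ ^ n * t ^ n) = t ^ n := by
      rw [← mul_assoc, ← mul_pow, mul_inv_cancel₀ (ne_of_gt ht0), one_pow, one_mul]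
    have h6 : t0 ^ n * (m / 2) ≤ t ^ n := by
      calc t0 ^ n * (m / 2) ≤ t0 ^ n * (t0⁻¹ ^ n * t ^ n) :=
            mul_le_mul_of_nonneg_left h4 (by positivity)
        _ = t ^ n := h5
    calc t0 ^ n = (2 / m) * (t0 ^ n * (m / 2)) := by field_simp
      _ ≤ (2 / m) * t ^ n := mul_le_mul_of_nonneg_left h6 (by positivity)
      _ = (2 / m) * (n : ℝ) ^ (0 : ℕ) * t ^ n := by rw [pow_zero, mul_one]
  have hle1 : t0 ≤ t := le_of_pow_le_pow_poly ht0 ht 0 hev2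
  -- upper bound: t ≤ t0
  have hev3 : ∀ᶠ n : ℕ in atTop, t ^ n ≤ ((C + Ab) * IW) * (n : ℝ) ^ L * t0 ^ n := by
    filter_upwards [eventually_ge_atTop 1] with n hn
    have hn1 : (1 : ℝ) ≤ (n : ℝ) := by exact_mod_cast hn
    have haeb : ∀ᵐ x ∂νq, ((S n x) Set.univ).toReal ≤
        t0 ^ n * (n : ℝ) ^ L * ((C + Ab) * W x) := by
      filter_upwards [hae] with x hx
      obtain ⟨hj0, hp1, hpinv⟩ := hjfacts n hn x
      have happ := happrox n hn x
      rw [hpinv] at happ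
      have hub : t0⁻¹ ^ n * ((n : ℝ) ^ (jfun S x))⁻¹ * ((S n x) Set.univ).toReal ≤
          (∑' i, η i x) + a n * W x := by linarith [abs_le.1 happ |>.2]
      have hsum0 : 0 ≤ (∑' i, η i x) + a n * W x :=
        add_nonneg (hg0 x) (mul_nonneg (hA.a_nonneg n) (hW0 x))
      have hpL : (n : ℝ) ^ (jfun S x) ≤ (n : ℝ) ^ (L : ℕ) := by
        calc (n : ℝ) ^ (jfun S x) ≤ (n : ℝ) ^ ((L : ℕ) : ℝ) :=
              Real.rpow_le_rpow_of_exponent_le hn1 (hx.trans (Nat.le_ceil l))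
          _ = (n : ℝ) ^ (L : ℕ) := Real.rpow_natCast _ L
      have h7 := pointwise_upper ht0 hp1 ENNReal.toReal_nonneg hsum0 hpL n hub
      calc ((S n x) Set.univ).toReal ≤ t0 ^ n * (n : ℝ) ^ (L : ℕ) * ((∑' i, η i x) + a n * W x) := h7
        _ ≤ t0 ^ n * (n : ℝ) ^ L * ((C + Ab) * W x) := by
            apply mul_le_mul_of_nonneg_left _ (by positivity)
            have hb1 : (∑' i, η i x) ≤ C * W x := hgW x
            have hb2 : a n * W x ≤ Ab * W x := mul_le_mul_of_nonneg_right (hAb n) (hW0 x)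
            nlinarith [hW0 x]
    have hintegral : ∫ x, ((S n x) Set.univ).toReal ∂νq ≤
        ∫ x, t0 ^ n * (n : ℝ) ^ L * ((C + Ab) * W x) ∂νq :=
      integral_mono_ae (hsint n) (((hWint.const_mul (C + Ab)).const_mul _)) haeb
    rw [key n] at hintegral
    calc t ^ n ≤ ∫ x, t0 ^ n * (n : ℝ) ^ L * ((C + Ab) * W x) ∂νq := hintegral
      _ = t0 ^ n * (n : ℝ) ^ L * ((C + Ab) * IW) := by
          rw [integral_const_mul]
          rw [integral_const_mul, ← hIWdef]
      _ = ((C + Ab) * IW) * (n : ℝ) ^ L * t0 ^ n := by ring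
  have hle2 : t ≤ t0 := le_of_pow_le_pow_poly ht ht0 L hev3
  have htt0 : t = t0 := le_antisymm hle2 hle1
  rw [htdef, ht0def] at htt0
  exact (ENNReal.toReal_eq_toReal_iff' hθtop h0top).1 htt0
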